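/- Let U be an update procedure of countable ordinal α, let β < α be a limit ordinal, and let g be a sequence of ordinal β. If a sequence f of ordinal α − β is U_g-generated, then there exists γ < β such that 0^{β−γ} * f is U_{g_{<γ}}-generated (Reduction Lemma, limit case, part 1). -/

import Mathlib

/-- Transfinite sequences of functions are modeled as functions on all ordinals;
an update procedure of ordinal `α` only depends on (and only updates) the
entries with index below `α`, and a "sequence of ordinal `β`" is read off from
its entries with index below `β`. -/
abbrev OSeq := Ordinal → ℕ → ℕ

/-- `U` is an update procedure of ordinal `α`. -/
def IsUpdateProc (α : Ordinal) (U : OSeq → Option (Ordinal × ℕ × ℕ)) : Prop :=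
  (∀ f : OSeq, ∃ A : Finset (Ordinal × ℕ), (∀ p ∈ A, p.1 < α) ∧
      ∀ g : OSeq, (∀ p ∈ A, g p.1 p.2 = f p.1 p.2) → U g = U f) ∧
  (∀ (f : OSeq) (β : Ordinal) (n m : ℕ), U f = some (β, n, m) → β < α) ∧
  (∀ (f g : OSeq) (β : Ordinal) (n m i j : ℕ),
      (∀ γ, γ < β → f γ = g γ) →
      U f = some (β, n, m) → g β n = m → U g = some (β, i, j) → i ≠ n)

/-- A sequence is finite (below `α`) if it has nonzero values in only
finitely many places. -/
def OFinite (α : Ordinal) (f : OSeq) : Prop :=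
  Set.Finite {p : Ordinal × ℕ | p.1 < α ∧ f p.1 p.2 ≠ 0}

/-- Controlled update `f ⊕ u`: update the `γ`-th function at `n` to value `m`
and erase (reset to `0`) everything of higher index. -/
noncomputable def oplus (f : OSeq) : Option (Ordinal × ℕ × ℕ) → OSeq
  | none => f
  | some (γ, n, m) => fun β x =>
      if β < γ then f β x
      else if β = γ then (if x = n then m else f β x)
      else 0

/-- The learning process generated by `U`:
`U^(0)` is the constantly `0` sequence and `U^(i+1) = U^(i) ⊕ U(U^(i))`. -/
noncomputable def learnProc (U : OSeq → Option (Ordinal × ℕ × ℕ)) : ℕ → OSeq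
  | 0 => fun _ _ => 0
  | i + 1 => oplus (learnProc U i) (U (learnProc U i))

/-- `f` is `U`-generated. -/
def IsGenerated (U : OSeq → Option (Ordinal × ℕ × ℕ)) (f : OSeq) : Prop :=
  ∃ i : ℕ, f = learnProc U i

/-- Concatenation `g * f` of a sequence `g` of ordinal `β` with a sequence `f`:
entries below `β` come from `g`, higher entries from `f` (shifted by `β`). -/
noncomputable def concatSeq (β : Ordinal) (g f : OSeq) : OSeq :=
  fun δ => if δ < β then g δ else f (δ - β)

/-- The shifted procedure `U_g` (for `g` a sequence of ordinal `β`):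
`U_g f = (γ,n,m)` if `U (g * f) = (β + γ, n, m)`, and `U_g f = ∅` otherwise. -/
noncomputable def shiftU (U : OSeq → Option (Ordinal × ℕ × ℕ)) (β : Ordinal)
    (g : OSeq) : OSeq → Option (Ordinal × ℕ × ℕ) :=
  fun f =>
    match U (concatSeq β g f) with
    | none => none
    | some (δ, n, m) => if β ≤ δ then some (δ - β, n, m) else none

/-- The constantly zero sequence. -/
def zeroSeq : OSeq := fun _ _ => 0

/-- Reduction Lemma (limit case, part 1): let `U` be an update procedure of
countable ordinal `α`, `β < α` a limit ordinal, and `g` a sequence of ordinal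
`β`. If a sequence `f` (of ordinal `α - β`) is `U_g`-generated, then there is
`γ < β` such that `0^(β-γ) * f` is `U_{g_{<γ}}`-generated. -/

private lemma osub_sub {γ β δ : Ordinal} (h1 : γ ≤ β) (h2 : β ≤ δ) :
    δ - γ = (β - γ) + (δ - β) := by
  have h : γ + ((β - γ) + (δ - β)) = δ := by
    rw [← add_assoc, Ordinal.add_sub_cancel_of_le h1, Ordinal.add_sub_cancel_of_le h2]
  conv_lhs => rw [← h]
  rw [Ordinal.add_sub_cancel]

theorem reduction_lemma_limit_part1 (α : Ordinal)
    (hcount : α.card ≤ Cardinal.aleph0)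
    (U : OSeq → Option (Ordinal × ℕ × ℕ)) (hU : IsUpdateProc α U)
    (β : Ordinal) (hβα : β < α) (hβ : Order.IsSuccLimit β)
    (g f : OSeq) (hf : IsGenerated (shiftU U β g) f) :
    ∃ γ, γ < β ∧ IsGenerated (shiftU U γ g) (concatSeq (β - γ) zeroSeq f) := by
  classical
  obtain ⟨i, hfi⟩ := hf
  set h : ℕ → OSeq := learnProc (shiftU U β g) with hh
  obtain ⟨cont, -, -⟩ := hU
  choose A hA1 hA2 using cont
  -- the "update index" of step k
  set d : ℕ → Ordinal := fun k =>
    match U (concatSeq β g (h k)) with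
    | some (δ, _, _) => δ
    | none => 0
    with hd
  set T : Finset Ordinal :=
    ((Finset.range (i+1)).biUnion (fun k => (A (concatSeq β g (h k))).image Prod.fst)) ∪
    ((Finset.range (i+1)).image d) with hT
  set T' : Finset Ordinal := T.filter (· < β) with hT'
  set γ := T'.sup Order.succ with hγdef
  have hγβ : γ < β := by
    rw [hγdef]
    refine (Finset.sup_lt_iff ?_).mpr ?_
    · simpa using hβ.pos
    · intro x hx
      rw [hT'] at hx
      exact hβ.succ_lt (by simpa using (Finset.mem_filter.mp hx).2)
  have hγle : γ ≤ β := le_of_lt hγβ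
  have hγlt : ∀ x ∈ T, x < β → x < γ := by
    intro x hx hxβ
    have hm : x ∈ T' := by
      rw [hT']; exact Finset.mem_filter.mpr ⟨hx, by simpa using hxβ⟩
    have : Order.succ x ≤ γ := by rw [hγdef]; exact Finset.le_sup hm
    exact Order.succ_le_iff.mp this
  -- zero padding
  set Z : OSeq → OSeq := concatSeq (β - γ) zeroSeq with hZ
  -- continuity: the γ-concatenation gives the same U-value
  have keyU : ∀ k, k ≤ i → U (concatSeq γ g (Z (h k))) = U (concatSeq β g (h k)) := by
    intro k hk
    apply hA2
    intro p hp
    have hpT : p.1 ∈ T := by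
      rw [hT]
      refine Finset.mem_union_left _ ?_
      exact Finset.mem_biUnion.mpr ⟨k, Finset.mem_range.mpr (Nat.lt_succ_of_le hk),
        Finset.mem_image_of_mem Prod.fst hp⟩
    by_cases hpβ : p.1 < β
    · have hpγ : p.1 < γ := hγlt _ hpT hpβ
      simp only [hZ, concatSeq, if_pos hpγ, if_pos hpβ]
    · have hβp : β ≤ p.1 := le_of_not_gt hpβ
      have hγp : ¬ p.1 < γ := fun hc => hpβ (lt_of_lt_of_le hc hγle)
      have hne : ¬ p.1 - γ < β - γ := by
        intro hc
        apply hpβ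
        have h2 := (add_lt_add_iff_left γ).mpr hc
        rwa [Ordinal.add_sub_cancel_of_le (le_trans hγle hβp),
          Ordinal.add_sub_cancel_of_le hγle] at h2
      have hsub : p.1 - γ - (β - γ) = p.1 - β := by
        rw [osub_sub hγle hβp, Ordinal.add_sub_cancel]
      simp only [hZ, concatSeq, if_neg hγp, if_neg hpβ, if_neg hne, hsub]
  -- main induction
  have main : ∀ k, k ≤ i → learnProc (shiftU U γ g) k = Z (h k) := by
    intro k
    induction k with
    | zero =>
      intro _
      funext δ x
      simp only [learnProc, hZ, concatSeq, zeroSeq, hh]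
      split <;> rfl
    | succ k ih =>
      intro hk
      have hk' : k ≤ i := Nat.le_of_succ_le hk
      have ihk := ih hk'
      have hstep : learnProc (shiftU U γ g) (k+1)
          = oplus (Z (h k)) (shiftU U γ g (Z (h k))) := by
        rw [learnProc, ihk]
      have hstepβ : h (k+1) = oplus (h k) (shiftU U β g (h k)) := by
        rw [hh]; rfl
      rw [hstep, hstepβ]
      have hUeq := keyU k hk'
      rcases hcase : U (concatSeq β g (h k)) with _ | ⟨δ, n, m⟩
      · have h1 : shiftU U γ g (Z (h k)) = none := by
          simp [shiftU, hUeq, hcase]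
        have h2 : shiftU U β g (h k) = none := by
          simp [shiftU, hcase]
        rw [h1, h2]; rfl
      · by_cases hδβ : β ≤ δ
        · have hγδ : γ ≤ δ := le_trans hγle hδβ
          have h1 : shiftU U γ g (Z (h k)) = some (δ - γ, n, m) := by
            simp [shiftU, hUeq, hcase, hγδ]
          have h2 : shiftU U β g (h k) = some (δ - β, n, m) := by
            simp [shiftU, hcase, hδβ]
          rw [h1, h2]
          funext ε x
          have hδγ : δ - γ = (β - γ) + (δ - β) := osub_sub hγle hδβ
          show (oplus (Z (h k)) (some (δ - γ, n, m))) ε x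
              = Z (oplus (h k) (some (δ - β, n, m))) ε x
          by_cases hε : ε < β - γ
          · have hεδ : ε < δ - γ := lt_of_lt_of_le hε (by rw [hδγ]; exact le_self_add)
            simp only [oplus, if_pos hεδ, hZ, concatSeq, if_pos hε, zeroSeq]
          · have hle : β - γ ≤ ε := le_of_not_gt hε
            obtain ⟨ε', rfl⟩ : ∃ ε', ε = (β - γ) + ε' :=
              ⟨ε - (β - γ), (Ordinal.add_sub_cancel_of_le hle).symm⟩
            have e1 : (β - γ) + ε' < δ - γ ↔ ε' < δ - β := by
              rw [hδγ]; exact add_lt_add_iff_left _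
            have e2 : (β - γ) + ε' = δ - γ ↔ ε' = δ - β := by
              rw [hδγ]; exact add_right_inj _
            have hnot : ¬ (β - γ) + ε' < β - γ := not_lt.mpr (le_self_add)
            simp only [oplus, hZ, concatSeq, if_neg hnot, Ordinal.add_sub_cancel]
            by_cases hc1 : ε' < δ - β
            · rw [if_pos (e1.mpr hc1), if_pos hc1]
            · rw [if_neg (fun hcc => hc1 (e1.mp hcc)), if_neg hc1]
              by_cases hc2 : ε' = δ - β
              · rw [if_pos (e2.mpr hc2), if_pos hc2]
              · rw [if_neg (fun hcc => hc2 (e2.mp hcc)), if_neg hc2]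
        · have hδltβ : δ < β := lt_of_not_ge hδβ
          have hdk : d k = δ := by
            rw [hd]; simp only; rw [hcase]
          have hδT : δ ∈ T := by
            rw [hT]
            exact Finset.mem_union_right _
              (Finset.mem_image.mpr ⟨k, Finset.mem_range.mpr (Nat.lt_succ_of_le hk'), hdk⟩)
          have hδγ : δ < γ := hγlt _ hδT hδltβ
          have h1 : shiftU U γ g (Z (h k)) = none := by
            simp [shiftU, hUeq, hcase, not_le.mpr hδγ]
          have h2 : shiftU U β g (h k) = none := by
            simp [shiftU, hcase, hδβ]
          rw [h1, h2]; rfl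
  refine ⟨γ, hγβ, i, ?_⟩
  rw [hfi]
  exact (main i le_rfl).symm
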